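/- Let C be a set of chords on a disjoint union of circles. Suppose (i) each chord has both endpoints on the same circle, and (ii) no two chords on the same circle have endpoints alternating around that circle. Then splitting along all |C| chords transforms the |s| circles into exactly |s| + |C| circles. (Abstract version, by induction: splitting a circle along a chord whose endpoints lie on it yields two circles, and conditions (i),(ii) are preserved by each splitting, so k independent chords increase the circle count by exactly k.) -/

import Mathlib

/-- The number of cycles (state circles) of a permutation: the number of orbits of the
relation `SameCycle`.  The cycles of `σ` model a disjoint union of circles, with `σ` sending
each marked point to the next marked point around its circle. -/
noncomputable def cycleCount {P : Type*} (σ : Equiv.Perm P) : ℕ :=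
  Nat.card (Quotient (Setoid.mk σ.SameCycle
    ⟨fun x => Equiv.Perm.SameCycle.refl σ x,
     fun h => h.symm, fun h₁ h₂ => h₁.trans h₂⟩))

section ChordSplit
set_option linter.unusedSectionVars false
set_option linter.unusedVariables false

open Equiv Equiv.Perm

variable {P : Type*} [Fintype P] [DecidableEq P]

private lemma sc_of_pow (σ : Equiv.Perm P) {x y : P} (i : ℕ) (h : (σ ^ i) x = y) :
    σ.SameCycle x y := ⟨(i : ℤ), by rwa [zpow_natCast]⟩

private lemma sc_iff_pow (σ : Equiv.Perm P) {x y : P} :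
    σ.SameCycle x y ↔ ∃ i : ℕ, (σ ^ i) x = y := by
  constructor
  · intro h
    obtain ⟨i, _, hi⟩ := h.exists_pow_eq'
    exact ⟨i, hi⟩
  · rintro ⟨i, hi⟩; exact sc_of_pow σ i hi

/-- The minimal positive period of `u` under `σ`. -/
private noncomputable def per (σ : Equiv.Perm P) (u : P) : ℕ :=
  Nat.find (p := fun m => 0 < m ∧ (σ ^ m) u = u)
    ⟨orderOf σ, orderOf_pos σ, by rw [pow_orderOf_eq_one]; rfl⟩

private lemma per_pos (σ : Equiv.Perm P) (u : P) : 0 < per σ u :=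
  (Nat.find_spec (p := fun m => 0 < m ∧ (σ ^ m) u = u) _).1

private lemma pow_per (σ : Equiv.Perm P) (u : P) : (σ ^ per σ u) u = u :=
  (Nat.find_spec (p := fun m => 0 < m ∧ (σ ^ m) u = u) _).2

private lemma per_least (σ : Equiv.Perm P) (u : P) {m : ℕ} (h0 : 0 < m) (hm : m < per σ u) :
    (σ ^ m) u ≠ u := fun hc =>
  Nat.find_min (p := fun m => 0 < m ∧ (σ ^ m) u = u) _ hm ⟨h0, hc⟩

private lemma pow_mod_of_period (f : Equiv.Perm P) (u : P) {n : ℕ} (hn : (f ^ n) u = u)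
    (m : ℕ) : (f ^ m) u = (f ^ (m % n)) u := by
  conv_lhs => rw [← Nat.mod_add_div m n]
  rw [pow_add, Equiv.Perm.mul_apply]
  congr 1
  induction (m / n) with
  | zero => simp
  | succ k ih => rw [Nat.mul_succ, pow_add, Equiv.Perm.mul_apply, hn, ih]

private lemma pow_mod_per (σ : Equiv.Perm P) (u : P) (m : ℕ) :
    (σ ^ m) u = (σ ^ (m % per σ u)) u :=
  pow_mod_of_period σ u (pow_per σ u) m

private lemma pow_per_inj (σ : Equiv.Perm P) (u : P) {i j : ℕ} (hi : i < per σ u)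
    (hj : j < per σ u) (h : (σ ^ i) u = (σ ^ j) u) : i = j := by
  wlog hij : i ≤ j generalizing i j
  · exact (this hj hi h.symm (le_of_not_ge hij)).symm
  rcases Nat.eq_or_lt_of_le hij with rfl | hlt
  · rfl
  · exfalso
    apply per_least σ u (show 0 < j - i by omega) (show j - i < per σ u by omega)
    have h2 : (σ ^ i) ((σ ^ (j - i)) u) = (σ ^ i) u := by
      rw [← Equiv.Perm.mul_apply, ← pow_add, show i + (j - i) = j by omega, ← h]
    exact (σ ^ i).injective h2

/-- Index of `x` on the cycle of `u`: least `i` with `σ^i u = x`. -/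
private noncomputable def ind (σ : Equiv.Perm P) (u x : P) : ℕ :=
  letI : Decidable (∃ i : ℕ, (σ ^ i) u = x) := Classical.dec _
  if h : ∃ i : ℕ, (σ ^ i) u = x then Nat.find h else 0

private lemma pow_ind (σ : Equiv.Perm P) {u x : P} (h : σ.SameCycle u x) :
    (σ ^ ind σ u x) u = x := by
  rw [sc_iff_pow] at h
  unfold ind
  rw [dif_pos h]
  exact Nat.find_spec h

private lemma ind_le (σ : Equiv.Perm P) {u x : P} {j : ℕ} (hj : (σ ^ j) u = x) :
    ind σ u x ≤ j := by
  have h : ∃ i : ℕ, (σ ^ i) u = x := ⟨j, hj⟩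
  unfold ind
  rw [dif_pos h]
  exact Nat.find_min' h hj

private lemma ind_lt_per (σ : Equiv.Perm P) {u x : P} (h : σ.SameCycle u x) :
    ind σ u x < per σ u := by
  obtain ⟨j, hj⟩ := (sc_iff_pow σ).1 h
  calc ind σ u x ≤ j % per σ u := ind_le σ (by rw [← pow_mod_per]; exact hj)
    _ < per σ u := Nat.mod_lt _ (per_pos σ u)

private lemma ind_self (σ : Equiv.Perm P) (u : P) : ind σ u u = 0 :=
  Nat.le_zero.1 (ind_le σ (j := 0) (by simp))

private lemma ind_eq_of_pow {σ : Equiv.Perm P} {u x : P} {j : ℕ} (hj : j < per σ u)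
    (h : (σ ^ j) u = x) : ind σ u x = j := by
  have hsc : σ.SameCycle u x := sc_of_pow σ j h
  exact pow_per_inj σ u (ind_lt_per σ hsc) hj (by rw [pow_ind σ hsc, h])

private lemma per_congr {σ : Equiv.Perm P} {u v : P} (h : σ.SameCycle u v) :
    per σ u = per σ v := by
  obtain ⟨j, hj⟩ := (sc_iff_pow σ).1 h
  have key : ∀ m, (σ ^ m) u = u → (σ ^ m) v = v := by
    intro m hm
    rw [← hj, ← Equiv.Perm.mul_apply, ← pow_add, add_comm, pow_add,
      Equiv.Perm.mul_apply, hm]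
  obtain ⟨j', hj'⟩ := (sc_iff_pow σ).1 h.symm
  have key' : ∀ m, (σ ^ m) v = v → (σ ^ m) u = u := by
    intro m hm
    rw [← hj', ← Equiv.Perm.mul_apply, ← pow_add, add_comm, pow_add,
      Equiv.Perm.mul_apply, hm]
  apply le_antisymm
  · exact Nat.find_min' _ ⟨per_pos σ v, key' _ (pow_per σ v)⟩
  · exact Nat.find_min' _ ⟨per_pos σ u, key _ (pow_per σ u)⟩

section Split

variable (σ : Equiv.Perm P) {a b : P}

private lemma sp_apply (x : P) : (σ * Equiv.swap a b) x = σ (Equiv.swap a b x) := rfl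

/-- On the arc: powers of `a` below the index of `b` avoid `b`. -/
private lemma pow_ne_b (hab : σ.SameCycle a b) {i : ℕ} (hi : i < ind σ a b) :
    (σ ^ i) a ≠ b := fun hc => absurd (ind_le σ hc) (by omega)

private lemma pow_ne_a (hab : σ.SameCycle a b) {i : ℕ} (h0 : 0 < i) (hi : i < ind σ a b) :
    (σ ^ i) a ≠ a := by
  intro hc
  apply pow_ne_b σ hab (show ind σ a b - i < ind σ a b by omega)
  calc (σ ^ (ind σ a b - i)) a = (σ ^ (ind σ a b - i)) ((σ ^ i) a) := by rw [hc]
    _ = (σ ^ (ind σ a b - i + i)) a := by rw [pow_add, Equiv.Perm.mul_apply]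
    _ = b := by rw [Nat.sub_add_cancel hi.le, pow_ind σ hab]

private lemma ind_pos (hab : σ.SameCycle a b) (hne : a ≠ b) : 0 < ind σ a b := by
  rcases Nat.eq_zero_or_pos (ind σ a b) with h | h
  · exfalso; apply hne; have := pow_ind σ hab; rw [h] at this; simpa using this
  · exact h

private lemma S1 (hab : σ.SameCycle a b) (hne : a ≠ b) :
    ∀ i : ℕ, 0 < i → i ≤ ind σ a b → ((σ * Equiv.swap a b) ^ i) b = (σ ^ i) a := by
  intro i
  induction i with
  | zero => omega
  | succ i ih =>
    intro _ hik
    rcases Nat.eq_zero_or_pos i with rfl | hi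
    · simp [sp_apply]
    · rw [pow_succ', Equiv.Perm.mul_apply, ih hi (by omega), sp_apply,
        Equiv.swap_apply_of_ne_of_ne (pow_ne_a σ hab hi (by omega))
          (pow_ne_b σ hab (by omega)), pow_succ', Equiv.Perm.mul_apply]

private lemma Sb_per (hab : σ.SameCycle a b) (hne : a ≠ b) :
    ((σ * Equiv.swap a b) ^ ind σ a b) b = b := by
  rw [S1 σ hab hne _ (ind_pos σ hab hne) le_rfl, pow_ind σ hab]

/-- Characterization of the cycle of `b` after splitting: it is the arc from `σ a` to `b`. -/
private lemma S2 (hab : σ.SameCycle a b) (hne : a ≠ b) (x : P) :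
    (σ * Equiv.swap a b).SameCycle b x ↔
      ∃ i : ℕ, 0 < i ∧ i ≤ ind σ a b ∧ (σ ^ i) a = x := by
  constructor
  · intro h
    obtain ⟨m, hm⟩ := (sc_iff_pow _).1 h
    rw [pow_mod_of_period _ b (Sb_per σ hab hne) m] at hm
    rcases Nat.eq_zero_or_pos (m % ind σ a b) with h0 | h0
    · rw [h0] at hm
      exact ⟨ind σ a b, ind_pos σ hab hne, le_rfl, by rw [pow_ind σ hab]; simpa using hm⟩
    · have hlt : m % ind σ a b < ind σ a b := Nat.mod_lt _ (ind_pos σ hab hne)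
      exact ⟨m % ind σ a b, h0, le_of_lt hlt,
        by rw [← S1 σ hab hne _ h0 (le_of_lt hlt)]; exact hm⟩
  · rintro ⟨i, h0, hik, hx⟩
    exact sc_of_pow _ i (by rw [S1 σ hab hne i h0 hik]; exact hx)

/-- The split genuinely separates `b` from `a`. -/
private lemma S3 (hab : σ.SameCycle a b) (hne : a ≠ b) :
    ¬ (σ * Equiv.swap a b).SameCycle b a := by
  rw [S2 σ hab hne]
  rintro ⟨i, h0, hik, hx⟩
  rcases Nat.eq_or_lt_of_le hik with rfl | hlt
  · rw [pow_ind σ hab] at hx; exact hne hx.symm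
  · exact pow_ne_a σ hab h0 hlt hx

/-- Splitting only refines cycles. -/
private lemma sc_subset (hab : σ.SameCycle a b) {x y : P}
    (h : (σ * Equiv.swap a b).SameCycle x y) : σ.SameCycle x y := by
  obtain ⟨m, hm⟩ := (sc_iff_pow _).1 h
  subst hm
  clear h
  induction m with
  | zero => exact Equiv.Perm.SameCycle.refl σ x
  | succ m ih =>
    rw [pow_succ', Equiv.Perm.mul_apply, sp_apply]
    rcases eq_or_ne (((σ * Equiv.swap a b) ^ m) x) a with h1 | h1
    · rw [h1, Equiv.swap_apply_left]
      exact ((show σ.SameCycle x a from h1 ▸ ih).trans hab).apply_right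
    rcases eq_or_ne (((σ * Equiv.swap a b) ^ m) x) b with h2 | h2
    · rw [h2, Equiv.swap_apply_right]
      exact ((show σ.SameCycle x b from h2 ▸ ih).trans hab.symm).apply_right
    · rw [Equiv.swap_apply_of_ne_of_ne h1 h2]
      exact ih.apply_right

/-- The two sides cover the original cycle. -/
private lemma sc_cover (hab : σ.SameCycle a b) {x : P} (h : σ.SameCycle a x) :
    (σ * Equiv.swap a b).SameCycle a x ∨ (σ * Equiv.swap a b).SameCycle b x := by
  obtain ⟨m, hm⟩ := (sc_iff_pow _).1 h
  subst hm
  clear h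
  induction m with
  | zero => exact Or.inl (Equiv.Perm.SameCycle.refl _ _)
  | succ m ih =>
    rw [pow_succ', Equiv.Perm.mul_apply]
    rcases eq_or_ne ((σ ^ m) a) a with h1 | h1
    · right
      rw [h1]
      exact sc_of_pow _ 1 (by simp [sp_apply])
    rcases eq_or_ne ((σ ^ m) a) b with h2 | h2
    · left
      rw [h2]
      exact sc_of_pow _ 1 (by simp [sp_apply])
    · have hstep : (σ * Equiv.swap a b) ((σ ^ m) a) = σ ((σ ^ m) a) := by
        rw [sp_apply, Equiv.swap_apply_of_ne_of_ne h1 h2]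
      rcases ih with ha | hb
      · exact Or.inl (ha.trans (hstep ▸ Equiv.Perm.SameCycle.apply_right (SameCycle.refl _ _)))
      · exact Or.inr (hb.trans (hstep ▸ Equiv.Perm.SameCycle.apply_right (SameCycle.refl _ _)))

/-- Points on other cycles are unaffected. -/
private lemma pow_transfer {x : P} (hxa : ¬ σ.SameCycle x a) (hxb : ¬ σ.SameCycle x b) :
    ∀ m : ℕ, ((σ * Equiv.swap a b) ^ m) x = (σ ^ m) x := by
  intro m
  induction m with
  | zero => rfl
  | succ m ih =>
    have h1 : (σ ^ m) x ≠ a := fun hc => hxa (sc_of_pow σ m hc)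
    have h2 : (σ ^ m) x ≠ b := fun hc => hxb (sc_of_pow σ m hc)
    rw [pow_succ', pow_succ']
    simp only [Equiv.Perm.mul_apply]
    rw [ih, Equiv.swap_apply_of_ne_of_ne h1 h2]

private lemma sc_transfer {x y : P} (hxa : ¬ σ.SameCycle x a) (hxb : ¬ σ.SameCycle x b) :
    ((σ * Equiv.swap a b).SameCycle x y ↔ σ.SameCycle x y) := by
  rw [sc_iff_pow, sc_iff_pow]
  constructor
  · rintro ⟨m, hm⟩; exact ⟨m, by rwa [pow_transfer σ hxa hxb] at hm⟩
  · rintro ⟨m, hm⟩; exact ⟨m, by rwa [pow_transfer σ hxa hxb]⟩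

/-- On the original cycle, being on the same side is equivalent to agreeing about `b`'s side. -/
private lemma sc_side (hab : σ.SameCycle a b) (hne : a ≠ b) {x y : P}
    (hx : σ.SameCycle a x) (hy : σ.SameCycle a y) :
    (σ * Equiv.swap a b).SameCycle x y ↔
      ((σ * Equiv.swap a b).SameCycle b x ↔ (σ * Equiv.swap a b).SameCycle b y) := by
  constructor
  · intro h
    exact ⟨fun hbx => hbx.trans h, fun hby => hby.trans h.symm⟩
  · intro h
    rcases sc_cover σ hab hx with hx' | hx'
    · rcases sc_cover σ hab hy with hy' | hy'
      · exact hx'.symm.trans hy'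
      · exact absurd ((h.2 hy').trans hx'.symm) (S3 σ hab hne)
    · rcases sc_cover σ hab hy with hy' | hy'
      · exact absurd ((h.1 hx').trans hy'.symm) (S3 σ hab hne)
      · exact hx'.symm.trans hy'

private lemma mono_step {a b u x : P} (hne : a ≠ b) (hab : σ.SameCycle a b)
    (hua : σ.SameCycle u a)
    (hx : (σ * Equiv.swap a b).SameCycle u x)
    (hstep : (σ * Equiv.swap a b) x ≠ u) :
    ind σ u x < ind σ u ((σ * Equiv.swap a b) x) := by
  have hux : σ.SameCycle u x := sc_subset σ hab hx
  have hαn : ind σ u a < per σ u := ind_lt_per σ hua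
  by_cases hxa : x = a
  · rw [hxa] at hx hstep hux ⊢
    have hub : σ.SameCycle u b := hua.trans hab
    have hu_aside : ¬ (σ * Equiv.swap a b).SameCycle b u :=
      fun hc => S3 σ hab hne (hc.trans hx)
    have h1 : ind σ u a + ind σ a b < per σ u := by
      by_contra hcon
      push_neg at hcon
      apply hu_aside
      apply (S2 σ hab hne u).2
      refine ⟨per σ u - ind σ u a, by omega, by omega, ?_⟩
      calc (σ ^ (per σ u - ind σ u a)) a
          = (σ ^ (per σ u - ind σ u a)) ((σ ^ ind σ u a) u) := by rw [pow_ind σ hua]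
        _ = (σ ^ (per σ u - ind σ u a + ind σ u a)) u := by
            rw [pow_add, Equiv.Perm.mul_apply]
        _ = u := by rw [Nat.sub_add_cancel hαn.le, pow_per]
    have hβ : ind σ u b = ind σ u a + ind σ a b := by
      apply ind_eq_of_pow h1
      calc (σ ^ (ind σ u a + ind σ a b)) u
          = (σ ^ ind σ a b) ((σ ^ ind σ u a) u) := by
            rw [add_comm, pow_add, Equiv.Perm.mul_apply]
        _ = b := by rw [pow_ind σ hua, pow_ind σ hab]
    have hτa : (σ * Equiv.swap a b) a = (σ ^ (ind σ u b + 1)) u := by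
      rw [sp_apply, Equiv.swap_apply_left, pow_succ', Equiv.Perm.mul_apply, pow_ind σ hub]
    have hβn : ind σ u b < per σ u := ind_lt_per σ hub
    have hβ1 : ind σ u b + 1 < per σ u := by
      rcases Nat.lt_or_ge (ind σ u b + 1) (per σ u) with h | h
      · exact h
      · exfalso
        apply hstep
        rw [hτa, show ind σ u b + 1 = per σ u by omega, pow_per]
    rw [hτa, ind_eq_of_pow hβ1 rfl]
    omega
  by_cases hxb : x = b
  · rw [hxb] at hx hstep hux ⊢
    obtain ⟨i, hi0, hik, hiu⟩ := (S2 σ hab hne u).1 hx.symm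
    have hkn : ind σ a b < per σ u := by
      rw [per_congr hua]
      exact ind_lt_per σ hab
    have hper_a : per σ a = per σ u := (per_congr hua).symm
    have hβ : ind σ u b = ind σ a b - i := by
      apply ind_eq_of_pow (by omega)
      calc (σ ^ (ind σ a b - i)) u = (σ ^ (ind σ a b - i)) ((σ ^ i) a) := by rw [hiu]
        _ = (σ ^ (ind σ a b - i + i)) a := by rw [pow_add, Equiv.Perm.mul_apply]
        _ = b := by rw [Nat.sub_add_cancel hik, pow_ind σ hab]
    have hin : i < per σ u := by omega
    have hni : (σ ^ (per σ u - i)) u = a := by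
      calc (σ ^ (per σ u - i)) u = (σ ^ (per σ u - i)) ((σ ^ i) a) := by rw [hiu]
        _ = (σ ^ (per σ u - i + i)) a := by rw [pow_add, Equiv.Perm.mul_apply]
        _ = a := by rw [Nat.sub_add_cancel hin.le, ← hper_a, pow_per]
    have hτb : (σ * Equiv.swap a b) b = (σ ^ (per σ u - i + 1)) u := by
      rw [sp_apply, Equiv.swap_apply_right, pow_succ', Equiv.Perm.mul_apply, hni]
    have h1 : per σ u - i + 1 < per σ u := by
      rcases Nat.lt_or_ge (per σ u - i + 1) (per σ u) with h | h
      · exact h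
      · exfalso
        apply hstep
        rw [hτb, show per σ u - i + 1 = per σ u by omega, pow_per]
    rw [hτb, ind_eq_of_pow h1 rfl, hβ]
    omega
  · have hτx : (σ * Equiv.swap a b) x = σ x := by
      rw [sp_apply, Equiv.swap_apply_of_ne_of_ne hxa hxb]
    have hσx : σ x = (σ ^ (ind σ u x + 1)) u := by
      rw [pow_succ', Equiv.Perm.mul_apply, pow_ind σ hux]
    have h1 : ind σ u x + 1 < per σ u := by
      rcases Nat.lt_or_ge (ind σ u x + 1) (per σ u) with h | h
      · exact h
      · exfalso
        apply hstep
        have : ind σ u x + 1 = per σ u := by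
          have := ind_lt_per σ hux
          omega
        rw [hτx, hσx, this, pow_per]
    rw [hτx, hσx, ind_eq_of_pow h1 rfl]
    omega

private lemma ind_mono_equiv {a b u x y : P} (hne : a ≠ b) (hab : σ.SameCycle a b)
    (hua : σ.SameCycle u a)
    (hx : (σ * Equiv.swap a b).SameCycle u x) (hy : (σ * Equiv.swap a b).SameCycle u y) :
    (ind (σ * Equiv.swap a b) u x ≤ ind (σ * Equiv.swap a b) u y ↔
      ind σ u x ≤ ind σ u y) := by
  set τ := σ * Equiv.swap a b with hτ
  have gmono : ∀ j, j < per τ u → ∀ i, i < j →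
      ind σ u ((τ ^ i) u) < ind σ u ((τ ^ j) u) := by
    intro j
    induction j with
    | zero => omega
    | succ j ihj =>
      intro hj i hij
      have hrw : (τ ^ (j + 1)) u = τ ((τ ^ j) u) := by rw [pow_succ']; rfl
      have hstep : τ ((τ ^ j) u) ≠ u := by
        rw [← hrw]
        exact per_least τ u (Nat.succ_pos j) hj
      have h1 : ind σ u ((τ ^ j) u) < ind σ u ((τ ^ (j + 1)) u) := by
        rw [hrw]
        exact mono_step σ hne hab hua (sc_of_pow τ j rfl) hstep
      rcases Nat.eq_or_lt_of_le (Nat.lt_succ_iff.1 hij) with rfl | hlt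
      · exact h1
      · exact (ihj (by omega) i hlt).trans h1
  have hix : (τ ^ ind τ u x) u = x := pow_ind τ hx
  have hiy : (τ ^ ind τ u y) u = y := pow_ind τ hy
  have hltx : ind τ u x < per τ u := ind_lt_per τ hx
  have hlty : ind τ u y < per τ u := ind_lt_per τ hy
  constructor
  · intro h
    rcases Nat.eq_or_lt_of_le h with heq | hlt
    · rw [← hix, ← hiy, heq]
    · exact (by rw [← hix, ← hiy]; exact (gmono _ hlty _ hlt).le)
  · intro h
    by_contra hcon
    push_neg at hcon
    have := gmono _ hltx _ hcon
    rw [hix, hiy] at this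
    omega

private lemma mem_side (f : Equiv.Perm P) {c d x : P} (hcd : f.SameCycle c d)
    (hcx : f.SameCycle c x) :
    (∃ i, 0 < i ∧ i ≤ ind f c d ∧ (f ^ i) c = x) ↔ (x ≠ c ∧ ind f c x ≤ ind f c d) := by
  constructor
  · rintro ⟨i, h0, hik, hix⟩
    have heq : ind f c x = i := ind_eq_of_pow (lt_of_le_of_lt hik (ind_lt_per f hcd)) hix
    constructor
    · intro hc
      rw [hc, ind_self] at heq
      omega
    · omega
  · rintro ⟨hxc, hle⟩
    refine ⟨ind f c x, ?_, hle, pow_ind f hcx⟩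
    rcases Nat.eq_zero_or_pos (ind f c x) with h0 | h0
    · exfalso
      apply hxc
      have := pow_ind f hcx
      rw [h0] at this
      simpa using this.symm
    · exact h0

/-- The key invariance: relative to a chord `(c,d)` lying on a single cycle both of `σ` and
of the split `σ * swap a b`, the side of `x` is the same before and after the split. -/
private lemma key {a b c d x : P} (hne : a ≠ b) (hab : σ.SameCycle a b)
    (hca : σ.SameCycle c a) (hcd' : (σ * Equiv.swap a b).SameCycle c d) (hcdne : c ≠ d)
    (hx : (σ * Equiv.swap a b).SameCycle c x) :
    ((σ * Equiv.swap a b) * Equiv.swap c d).SameCycle d x ↔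
      (σ * Equiv.swap c d).SameCycle d x := by
  have hcd : σ.SameCycle c d := sc_subset σ hab hcd'
  have hσx : σ.SameCycle c x := sc_subset σ hab hx
  rw [S2 (σ * Equiv.swap a b) hcd' hcdne x, S2 σ hcd hcdne x,
    mem_side (σ * Equiv.swap a b) hcd' hx, mem_side σ hcd hσx]
  constructor
  · rintro ⟨h1, h2⟩
    exact ⟨h1, (ind_mono_equiv σ hne hab hca hx hcd').1 h2⟩
  · rintro ⟨h1, h2⟩
    exact ⟨h1, (ind_mono_equiv σ hne hab hca hx hcd').2 h2⟩


end Split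

private def scs (σ : Equiv.Perm P) : Setoid P :=
  Setoid.mk σ.SameCycle
    ⟨fun x => Equiv.Perm.SameCycle.refl σ x,
     fun h => h.symm, fun h₁ h₂ => h₁.trans h₂⟩

private lemma cycleCount_eq (σ : Equiv.Perm P) :
    cycleCount σ = Nat.card (Quotient (scs σ)) := rfl

private lemma scs_exact {σ : Equiv.Perm P} {x y : P}
    (h : Quotient.mk (scs σ) x = Quotient.mk (scs σ) y) : σ.SameCycle x y :=
  Quotient.exact h

private lemma scs_sound {σ : Equiv.Perm P} {x y : P} (h : σ.SameCycle x y) :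
    Quotient.mk (scs σ) x = Quotient.mk (scs σ) y :=
  Quotient.sound h

/-- Splitting along a chord on a single cycle increases the cycle count by one. -/
private lemma cycleCount_split (σ : Equiv.Perm P) {a b : P} (hne : a ≠ b)
    (hab : σ.SameCycle a b) :
    cycleCount (σ * Equiv.swap a b) = cycleCount σ + 1 := by
  classical
  set τ := σ * Equiv.swap a b with hτ
  have hg : ∀ x : P, σ.SameCycle x b → σ.SameCycle a x := fun x h => (h.trans hab.symm).symm
  let g : P → {y : Quotient (scs τ) // y ≠ Quotient.mk (scs τ) b} := fun x =>
    if h : σ.SameCycle a x then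
      ⟨Quotient.mk (scs τ) a, fun hc => S3 σ hab hne (scs_exact hc).symm⟩
    else
      ⟨Quotient.mk (scs τ) x, fun hc => h (hg x (sc_subset σ hab (scs_exact hc)))⟩
  have hwd : ∀ x y : P, σ.SameCycle x y → g x = g y := by
    intro x y hxy
    by_cases hax : σ.SameCycle a x
    · have hay : σ.SameCycle a y := hax.trans hxy
      simp only [g, dif_pos hax, dif_pos hay]
    · have hay : ¬ σ.SameCycle a y := fun hc => hax (hc.trans hxy.symm)
      simp only [g, dif_neg hax, dif_neg hay]
      apply Subtype.ext
      apply scs_sound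
      have h1 : ¬ σ.SameCycle x a := fun hc => hax hc.symm
      have h2 : ¬ σ.SameCycle x b := fun hc => hax (hg x hc)
      exact (sc_transfer σ h1 h2).2 hxy
  let f : Quotient (scs σ) → {y : Quotient (scs τ) // y ≠ Quotient.mk (scs τ) b} :=
    Quotient.lift g (fun x y h => hwd x y h)
  have hinj : Function.Injective f := by
    intro c₁ c₂
    induction c₁ using Quotient.ind with | _ x =>
    induction c₂ using Quotient.ind with | _ y =>
    intro hxy
    apply scs_sound
    by_cases hax : σ.SameCycle a x <;> by_cases hay : σ.SameCycle a y
    · exact hax.symm.trans hay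
    · exfalso
      simp only [f, Quotient.lift_mk, g, dif_pos hax, dif_neg hay, Subtype.mk.injEq] at hxy
      exact hay (sc_subset σ hab (scs_exact hxy))
    · exfalso
      simp only [f, Quotient.lift_mk, g, dif_neg hax, dif_pos hay, Subtype.mk.injEq] at hxy
      exact hax (sc_subset σ hab (scs_exact hxy.symm))
    · simp only [f, Quotient.lift_mk, g, dif_neg hax, dif_neg hay, Subtype.mk.injEq] at hxy
      have h1 : ¬ σ.SameCycle x a := fun hc => hax hc.symm
      have h2 : ¬ σ.SameCycle x b := fun hc => hax (hg x hc)
      exact (sc_transfer σ h1 h2).1 (scs_exact hxy)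
  have hsurj : Function.Surjective f := by
    rintro ⟨y, hy⟩
    induction y using Quotient.ind with | _ x =>
    have hbx : ¬ τ.SameCycle b x := fun hc => hy (scs_sound hc).symm
    by_cases hax : σ.SameCycle a x
    · refine ⟨Quotient.mk (scs σ) a, ?_⟩
      have hax' : τ.SameCycle a x := (sc_cover σ hab hax).resolve_right hbx
      simp only [f, Quotient.lift_mk, g, dif_pos (Equiv.Perm.SameCycle.refl σ a)]
      exact Subtype.ext (scs_sound hax')
    · refine ⟨Quotient.mk (scs σ) x, ?_⟩
      simp only [f, Quotient.lift_mk, g, dif_neg hax]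
  haveI : Finite (Quotient (scs τ)) := Quotient.finite _
  haveI : Finite (Quotient (scs σ)) := Quotient.finite _
  have e : Quotient (scs σ) ≃ {y : Quotient (scs τ) // y ≠ Quotient.mk (scs τ) b} :=
    Equiv.ofBijective f ⟨hinj, hsurj⟩
  have e2 : Option {y : Quotient (scs τ) // y ≠ Quotient.mk (scs τ) b} ≃ Quotient (scs τ) :=
    Equiv.optionSubtypeNe _
  rw [cycleCount_eq, cycleCount_eq, ← Nat.card_congr e2, Finite.card_option, Nat.card_congr e]

private lemma swap_mul_comm {a b c d : P} (h1 : a ≠ c) (h2 : a ≠ d) (h3 : b ≠ c) (h4 : b ≠ d) :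
    Equiv.swap a b * Equiv.swap c d = Equiv.swap c d * Equiv.swap a b := by
  ext x
  simp only [Equiv.Perm.mul_apply, Equiv.swap_apply_def]
  split_ifs <;> simp_all

private lemma endpoints_ne {L : List (P × P)}
    (h : (L.flatMap fun p => [p.1, p.2]).Nodup) : ∀ q ∈ L, q.1 ≠ q.2 := by
  induction L with
  | nil => simp
  | cons p L ih =>
    rw [List.flatMap_cons, List.nodup_append] at h
    intro q hq
    rcases List.mem_cons.1 hq with rfl | hq'
    · simpa using h.1
    · exact ih h.2.1 q hq'

private lemma main_aux : ∀ (L : List (P × P)) (σ : Equiv.Perm P),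
    (L.flatMap fun p => [p.1, p.2]).Nodup →
    (∀ p ∈ L, σ.SameCycle p.1 p.2) →
    (∀ p ∈ L, ∀ q ∈ L, p ≠ q → σ.SameCycle p.1 q.1 →
      (σ * Equiv.swap p.1 p.2).SameCycle q.1 q.2) →
    cycleCount (σ * (L.map fun p => Equiv.swap p.1 p.2).prod) = cycleCount σ + L.length := by
  intro L
  induction L with
  | nil => intro σ _ _ _; simp
  | cons p L' ih =>
    intro σ hnodup hsame hnonalt
    rw [List.flatMap_cons, List.nodup_append] at hnodup
    obtain ⟨hnd_pair, hnd_tail, hdisj⟩ := hnodup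
    have hp12 : p.1 ≠ p.2 := by simpa using hnd_pair
    have hmem1 : ∀ q ∈ L', q.1 ∈ L'.flatMap (fun p => [p.1, p.2]) :=
      fun q hq => List.mem_flatMap.2 ⟨q, hq, by simp⟩
    have hmem2 : ∀ q ∈ L', q.2 ∈ L'.flatMap (fun p => [p.1, p.2]) :=
      fun q hq => List.mem_flatMap.2 ⟨q, hq, by simp⟩
    have hpL' : p ∉ L' := fun hc => hdisj p.1 (show p.1 ∈ [p.1, p.2] by simp) p.1 (hmem1 p hc) rfl
    have hpmem : p ∈ p :: L' := List.mem_cons_self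
    have hsp : σ.SameCycle p.1 p.2 := hsame p hpmem
    have hpne : ∀ q ∈ L', p ≠ q := fun q hq hc => hpL' (hc ▸ hq)
    have hdq : ∀ q ∈ L', p.1 ≠ q.1 ∧ p.1 ≠ q.2 ∧ p.2 ≠ q.1 ∧ p.2 ≠ q.2 := by
      intro q hq
      refine ⟨fun hc => hdisj p.1 (by simp) q.1 (hmem1 q hq) hc,
        fun hc => hdisj p.1 (by simp) q.2 (hmem2 q hq) hc,
        fun hc => hdisj p.2 (by simp) q.1 (hmem1 q hq) hc,
        fun hc => hdisj p.2 (by simp) q.2 (hmem2 q hq) hc⟩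
    have hsame' : ∀ q ∈ L', (σ * Equiv.swap p.1 p.2).SameCycle q.1 q.2 := by
      intro q hq
      by_cases hpq : σ.SameCycle p.1 q.1
      · exact hnonalt p hpmem q (List.mem_cons_of_mem _ hq) (hpne q hq) hpq
      · have h1 : ¬ σ.SameCycle q.1 p.1 := fun hc => hpq hc.symm
        have h2 : ¬ σ.SameCycle q.1 p.2 := fun hc => hpq (hsp.trans hc.symm)
        exact (sc_transfer σ h1 h2).2 (hsame q (List.mem_cons_of_mem _ hq))
    have hnonalt' : ∀ q ∈ L', ∀ r ∈ L', q ≠ r →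
        (σ * Equiv.swap p.1 p.2).SameCycle q.1 r.1 →
        ((σ * Equiv.swap p.1 p.2) * Equiv.swap q.1 q.2).SameCycle r.1 r.2 := by
      intro q hq r hr hqr hq1r1
      have hqL : q ∈ p :: L' := List.mem_cons_of_mem _ hq
      have hrL : r ∈ p :: L' := List.mem_cons_of_mem _ hr
      have hsq : σ.SameCycle q.1 q.2 := hsame q hqL
      have hsr : σ.SameCycle r.1 r.2 := hsame r hrL
      have hq1r1σ : σ.SameCycle q.1 r.1 := sc_subset σ hsp hq1r1
      have hq12 : q.1 ≠ q.2 := endpoints_ne hnd_tail q hq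
      have C : (σ * Equiv.swap q.1 q.2).SameCycle r.1 r.2 :=
        hnonalt q hqL r hrL hqr hq1r1σ
      by_cases hpq : σ.SameCycle p.1 q.1
      · -- all three chords on one cycle of σ
        have hpr : σ.SameCycle p.1 r.1 := hpq.trans hq1r1σ
        have A : (σ * Equiv.swap p.1 p.2).SameCycle q.1 q.2 :=
          hnonalt p hpmem q hqL (hpne q hq) hpq
        have B : (σ * Equiv.swap p.1 p.2).SameCycle r.1 r.2 :=
          hnonalt p hpmem r hrL (hpne r hr) hpr
        have hr2 : (σ * Equiv.swap p.1 p.2).SameCycle q.1 r.2 := hq1r1.trans B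
        rw [sc_side (σ * Equiv.swap p.1 p.2) A hq12 hq1r1 hr2,
          key σ hp12 hsp hpq.symm A hq12 hq1r1,
          key σ hp12 hsp hpq.symm A hq12 hr2,
          ← sc_side σ hsq hq12 hq1r1σ (hq1r1σ.trans hsr)]
        exact C
      · -- q, r on a cycle not containing the chord p
        have hr1p1 : ¬ (σ * Equiv.swap q.1 q.2).SameCycle r.1 p.1 :=
          fun hc => hpq (hq1r1σ.trans (sc_subset σ hsq hc)).symm
        have hr1p2 : ¬ (σ * Equiv.swap q.1 q.2).SameCycle r.1 p.2 :=
          fun hc => hpq ((hq1r1σ.trans (sc_subset σ hsq hc)).trans hsp.symm).symm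
        have hres : ((σ * Equiv.swap q.1 q.2) * Equiv.swap p.1 p.2).SameCycle r.1 r.2 :=
          (sc_transfer (σ * Equiv.swap q.1 q.2) hr1p1 hr1p2).2 C
        obtain ⟨d1, d2, d3, d4⟩ := hdq q hq
        rw [mul_assoc, swap_mul_comm d1 d2 d3 d4, ← mul_assoc]
        exact hres
    have hcount := cycleCount_split σ hp12 hsp
    rw [List.map_cons, List.prod_cons, ← mul_assoc,
      ih (σ * Equiv.swap p.1 p.2) hnd_tail hsame' hnonalt', hcount, List.length_cons]
    omega


end ChordSplit

/-- Splitting circles along an independent set of chords.  The marked points on the circles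
are the chord endpoints; the circles are the cycles of `σ`.  A chord with endpoints `p.1, p.2`
is split by composing with the transposition `swap p.1 p.2`.  Hypotheses: all chord endpoints
are distinct; (i) each chord has both endpoints on the same circle; (ii) two chords lying on a
common circle do not alternate around it, i.e. after splitting along the first chord the two
endpoints of the second still lie on one circle.  Conclusion: splitting along all `k = |C|`
chords yields exactly `k` extra circles. -/
theorem cycleCount_split_independent {P : Type*} [Fintype P] [DecidableEq P]
    (σ : Equiv.Perm P) (L : List (P × P))
    (hnodup : (L.flatMap fun p => [p.1, p.2]).Nodup)
    (hsame : ∀ p ∈ L, σ.SameCycle p.1 p.2)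
    (hnonalt : ∀ p ∈ L, ∀ q ∈ L, p ≠ q → σ.SameCycle p.1 q.1 →
      (σ * Equiv.swap p.1 p.2).SameCycle q.1 q.2) :
    cycleCount (σ * (L.map fun p => Equiv.swap p.1 p.2).prod) =
      cycleCount σ + L.length :=
  main_aux L σ hnodup hsame hnonalt
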